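/- The function V satisfies: (i) V is non-decreasing in each argument; (ii) −m_θ < V(t,x) ≤ 0 for all t ≥ 0 and x ∈ ℝ; (iii) V(t,x) < 0 whenever t < m_θ and x < h^θ(t), where h^θ(t) = σ²(log 2 − θt)/(√(μ²+2σ²θ)+μ); (iv) V(t,x) = 0 for all t ≥ m_θ and x ∈ ℝ. -/

import Mathlib

open MeasureTheory ProbabilityTheory Real Set Filter
open scoped ENNReal NNReal

noncomputable section

/-- `B` is a standard `(F t)`-Brownian motion (on nonnegative times) under `P`. -/
structure IsStandardBM {Ω : Type*} {mΩ : MeasurableSpace Ω} (P : Measure Ω)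
    (F : Filtration ℝ mΩ) (B : ℝ → Ω → ℝ) : Prop where
  adapted : ∀ t : ℝ, 0 ≤ t → Measurable[F t] (B t)
  start : ∀ᵐ ω ∂P, B 0 ω = 0
  cont : ∀ᵐ ω ∂P, ContinuousOn (fun t => B t ω) (Set.Ici (0 : ℝ))
  incr_law : ∀ t s : ℝ, 0 ≤ t → 0 ≤ s →
    P.map (fun ω => B (t + s) ω - B t ω) = gaussianReal 0 s.toNNReal
  incr_indep : ∀ t s : ℝ, 0 ≤ t → 0 ≤ s →
    Indep (MeasurableSpace.comap (fun ω => B (t + s) ω - B t ω) Real.measurableSpace)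
      (F t) P

/-- The filtration `F` satisfies the usual conditions under `P`: it is right-continuous and
each `F t` contains all `P`-null sets. -/
structure UsualConditions {Ω : Type*} {mΩ : MeasurableSpace Ω} (P : Measure Ω)
    (F : Filtration ℝ mΩ) : Prop where
  right_cont : ∀ t : ℝ, (F t : MeasurableSpace Ω) = ⨅ s ∈ Set.Ioi t, (F s : MeasurableSpace Ω)
  complete : ∀ t : ℝ, ∀ s : Set Ω, P s = 0 → MeasurableSet[F t] s

/-- `e` is an exponential random variable with rate `θ`, independent of `𝓕_∞ = ⨆ t, F t`. -/
structure IsIndepExp {Ω : Type*} {mΩ : MeasurableSpace Ω} (P : Measure Ω)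
    (F : Filtration ℝ mΩ) (θ : ℝ) (e : Ω → ℝ) : Prop where
  measurable : Measurable e
  law : P.map e = expMeasure θ
  indep : Indep (MeasurableSpace.comap e Real.measurableSpace)
    (⨆ t : ℝ, (F t : MeasurableSpace Ω)) P

/-- `F^θ(x) = 1 - exp (-c x)` for `x ≥ 0`, `0` for `x < 0` (here `c = c_θ`). -/
def Fth (c x : ℝ) : ℝ := if 0 ≤ x then 1 - Real.exp (-c * x) else 0

/-- `G^θ(s,x) = 1 + 2 e^{-θ s} (F^θ(x) - 1)`. -/
def Gth (θ c s x : ℝ) : ℝ := 1 + 2 * Real.exp (-θ * s) * (Fth c x - 1)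

/-- The expected cost `𝔼[∫_0^τ G^θ(t+s, x+X_s) ds]` associated with a stopping time `τ`. -/
def payoff {Ω : Type*} {mΩ : MeasurableSpace Ω} (P : Measure Ω) (θ c : ℝ)
    (X : ℝ → Ω → ℝ) (t x : ℝ) (τ : Ω → ℝ) : ℝ :=
  ∫ ω, (∫ s in Set.Ioc (0 : ℝ) (τ ω), Gth θ c (t + s) (x + X s ω)) ∂P

/-- The value function `V(t,x) = inf_τ 𝔼[∫_0^τ G^θ(t+s, x+X_s) ds]`, infimum over all
`(F t)`-stopping times. -/
def valueV {Ω : Type*} {mΩ : MeasurableSpace Ω} (P : Measure Ω) (F : Filtration ℝ mΩ)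
    (θ c : ℝ) (X : ℝ → Ω → ℝ) (t x : ℝ) : ℝ :=
  sInf {v : ℝ | ∃ τ : Ω → ℝ, IsStoppingTime F (fun ω => (τ ω : WithTop ℝ)) ∧ (∀ ω, 0 ≤ τ ω) ∧
    v = payoff P θ c X t x τ}

/-- The optimal stopping boundary `b(t) = inf {x : V(t,x) = 0}`. -/
def bdry {Ω : Type*} {mΩ : MeasurableSpace Ω} (P : Measure Ω) (F : Filtration ℝ mΩ)
    (θ c : ℝ) (X : ℝ → Ω → ℝ) (t : ℝ) : ℝ :=
  sInf {x : ℝ | valueV P F θ c X t x = 0}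

/-- The last zero of `X` before the time `e ω`:  `g = sup {t ∈ [0, e] : X_t ≤ 0}`
(with `sup ∅ = 0`). -/
def lastZero {Ω : Type*} (X : ℝ → Ω → ℝ) (e : Ω → ℝ) (ω : Ω) : ℝ :=
  sSup {t : ℝ | 0 ≤ t ∧ t ≤ e ω ∧ X t ω ≤ 0}

lemma Fth_eq_max {c : ℝ} (hc : 0 < c) (x : ℝ) :
    Fth c x = max (1 - Real.exp (-c * x)) 0 := by
  unfold Fth
  by_cases h : 0 ≤ x
  · rw [if_pos h, eq_comm, max_eq_left]
    have : Real.exp (-c * x) ≤ 1 := by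
      rw [show (1:ℝ) = Real.exp 0 by simp]
      exact Real.exp_le_exp.mpr (by nlinarith)
    linarith
  · rw [if_neg h, eq_comm, max_eq_right]
    have : (1:ℝ) ≤ Real.exp (-c * x) := by
      rw [show (1:ℝ) = Real.exp 0 by simp]
      exact Real.exp_le_exp.mpr (by nlinarith)
    linarith

lemma Fth_nonneg {c : ℝ} (hc : 0 < c) (x : ℝ) : 0 ≤ Fth c x := by
  rw [Fth_eq_max hc]; exact le_max_right _ _

lemma Fth_le_one {c : ℝ} (hc : 0 < c) (x : ℝ) : Fth c x ≤ 1 := by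
  rw [Fth_eq_max hc]
  exact max_le (by linarith [Real.exp_pos (-c * x)]) zero_le_one

lemma Fth_mono {c : ℝ} (hc : 0 < c) {x y : ℝ} (hxy : x ≤ y) : Fth c x ≤ Fth c y := by
  rw [Fth_eq_max hc, Fth_eq_max hc]
  refine max_le_max ?_ le_rfl
  have : Real.exp (-c * y) ≤ Real.exp (-c * x) := Real.exp_le_exp.mpr (by nlinarith)
  linarith

lemma Gth_le_one {θ c : ℝ} (hc : 0 < c) (s x : ℝ) : Gth θ c s x ≤ 1 := by
  unfold Gth
  nlinarith [mul_nonneg (Real.exp_pos (-θ * s)).le (sub_nonneg.2 (Fth_le_one hc x))]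

lemma Gth_lower {θ c : ℝ} (hc : 0 < c) (s x : ℝ) :
    1 - 2 * Real.exp (-θ * s) ≤ Gth θ c s x := by
  unfold Gth
  nlinarith [mul_nonneg (Real.exp_pos (-θ * s)).le (Fth_nonneg hc x)]

lemma Gth_mono {θ c : ℝ} (hθ : 0 < θ) (hc : 0 < c) {s s' x x' : ℝ}
    (hs : s ≤ s') (hx : x ≤ x') : Gth θ c s x ≤ Gth θ c s' x' := by
  unfold Gth
  have hE : Real.exp (-θ * s') ≤ Real.exp (-θ * s) := Real.exp_le_exp.mpr (by nlinarith)
  have h1 : Real.exp (-θ * s) * (Fth c x - 1) ≤ Real.exp (-θ * s) * (Fth c x' - 1) :=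
    mul_le_mul_of_nonneg_left (by linarith [Fth_mono hc hx]) (Real.exp_pos _).le
  have h2 : Real.exp (-θ * s) * (Fth c x' - 1) ≤ Real.exp (-θ * s') * (Fth c x' - 1) :=
    mul_le_mul_of_nonpos_right hE (by linarith [Fth_le_one hc x'])
  linarith

lemma Gth_cont {θ c : ℝ} (hc : 0 < c) :
    Continuous fun p : ℝ × ℝ => Gth θ c p.1 p.2 := by
  have h : (fun p : ℝ × ℝ => Gth θ c p.1 p.2) =
      fun p : ℝ × ℝ => 1 + 2 * Real.exp (-θ * p.1) * (max (1 - Real.exp (-c * p.2)) 0 - 1) := by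
    funext p; rw [Gth, Fth_eq_max hc]
  rw [h]; fun_prop

lemma key_ineq {θ : ℝ} (hθ : 0 < θ) (T : ℝ) (hT : 0 ≤ T) :
    (Real.log 2 - 1) / θ ≤ T + 2 / θ * Real.exp (-θ * T) - 2 / θ := by
  have h := Real.add_one_le_exp (Real.log 2 + -(θ * T))
  have h2 : Real.exp (Real.log 2 + -(θ * T)) = 2 * Real.exp (-θ * T) := by
    rw [Real.exp_add, Real.exp_log (by norm_num : (0:ℝ) < 2)]
    ring_nf
  rw [h2] at h
  rw [div_le_iff₀ hθ]
  have h3 : (T + 2 / θ * Real.exp (-θ * T) - 2 / θ) * θ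
      = T * θ + 2 * Real.exp (-θ * T) - 2 := by field_simp
  rw [h3]; nlinarith

lemma integ_lower {θ : ℝ} (hθ : 0 < θ) (T : ℝ) (hT : 0 ≤ T) :
    ∫ s in Set.Ioc (0:ℝ) T, (1 - 2 * Real.exp (-θ * s))
      = T + 2 / θ * Real.exp (-θ * T) - 2 / θ := by
  rw [← intervalIntegral.integral_of_le hT]
  have hderiv : ∀ s ∈ Set.uIcc (0:ℝ) T,
      HasDerivAt (fun u => u + 2 / θ * Real.exp (-θ * u)) (1 - 2 * Real.exp (-θ * s)) s := by
    intro s _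
    have h1 : HasDerivAt (fun u : ℝ => -θ * u) (-θ) s := by
      simpa using (hasDerivAt_id s).const_mul (-θ)
    have h2 := (h1.exp.const_mul (2 / θ)).const_add 0
    have h3 := (hasDerivAt_id s).add (h1.exp.const_mul (2 / θ))
    refine h3.congr_deriv ?_
    field_simp
    ring
  rw [intervalIntegral.integral_eq_sub_of_hasDerivAt hderiv
    ((by fun_prop : Continuous fun s : ℝ => 1 - 2 * Real.exp (-θ * s)).intervalIntegrable 0 T)]
  simp [Real.exp_zero]

lemma inner_lower {θ : ℝ} (hθ : 0 < θ) (f : ℝ → ℝ) (T : ℝ) (hT : 0 ≤ T)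
    (hlog : Real.log 2 < 1)
    (hf : ∀ s ∈ Set.Ioc (0:ℝ) T, 1 - 2 * Real.exp (-θ * s) ≤ f s) :
    (Real.log 2 - 1) / θ ≤ ∫ s in Set.Ioc (0:ℝ) T, f s := by
  by_cases hint : IntegrableOn f (Set.Ioc (0:ℝ) T) volume
  · have hlow : IntegrableOn (fun s => 1 - 2 * Real.exp (-θ * s)) (Set.Ioc (0:ℝ) T) volume :=
      (by fun_prop : Continuous fun s : ℝ => 1 - 2 * Real.exp (-θ * s)).integrableOn_Ioc
    calc (Real.log 2 - 1) / θ ≤ T + 2 / θ * Real.exp (-θ * T) - 2 / θ := key_ineq hθ T hT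
      _ = ∫ s in Set.Ioc (0:ℝ) T, (1 - 2 * Real.exp (-θ * s)) := (integ_lower hθ T hT).symm
      _ ≤ ∫ s in Set.Ioc (0:ℝ) T, f s := setIntegral_mono_on hlow hint measurableSet_Ioc hf
  · rw [integral_undef hint]
    exact div_nonpos_of_nonpos_of_nonneg (by linarith) hθ.le

lemma Gth_cont2 {θ c : ℝ} (hc : 0 < c) (a b : ℝ) :
    Continuous fun p : ℝ × ℝ => Gth θ c (a + p.1) (b + p.2) := by
  have h : (fun p : ℝ × ℝ => Gth θ c (a + p.1) (b + p.2)) =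
      fun p : ℝ × ℝ => 1 + 2 * Real.exp (-θ * (a + p.1)) *
        (max (1 - Real.exp (-c * (b + p.2))) 0 - 1) := by
    funext p; rw [Gth, Fth_eq_max hc]
  rw [h]; fun_prop

lemma Gth_contOn {θ c : ℝ} (hc : 0 < c) (a b : ℝ) {g : ℝ → ℝ} {S : Set ℝ}
    (hg : ContinuousOn g S) :
    ContinuousOn (fun s => Gth θ c (a + s) (b + g s)) S := by
  have h : (fun s => Gth θ c (a + s) (b + g s)) =
      fun s => 1 + 2 * Real.exp (-θ * (a + s)) *
        (max (1 - Real.exp (-c * (b + g s))) 0 - 1) := by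
    funext s; rw [Gth, Fth_eq_max hc]
  rw [h]; fun_prop

section Aux

variable {Ω : Type*} {mΩ : MeasurableSpace Ω} (P : Measure Ω)

lemma aesm_inner (X : ℝ → Ω → ℝ)
    (hXm : ∀ s : ℝ, 0 ≤ s → Measurable (X s))
    (hXc : ∀ᵐ ω ∂P, ContinuousOn (fun s => X s ω) (Set.Ici (0:ℝ)))
    (g : ℝ → ℝ → ℝ) (hg : Continuous fun p : ℝ × ℝ => g p.1 p.2)
    (τ : Ω → ℝ) (hτ : Measurable τ) :
    AEStronglyMeasurable (fun ω => ∫ s in Set.Ioc (0:ℝ) (τ ω), g s (X s ω)) P := by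
  classical
  set N := toMeasurable P {ω | ¬ ContinuousOn (fun s => X s ω) (Set.Ici (0:ℝ))} with hN
  have hNm : MeasurableSet N := measurableSet_toMeasurable _ _
  have hN0 : P N = 0 := by
    rw [hN, measure_toMeasurable]
    rw [ae_iff] at hXc
    exact hXc
  set C := Nᶜ with hCdef
  have hCm : MeasurableSet C := hNm.compl
  have hCc : ∀ ω ∈ C, ContinuousOn (fun s => X s ω) (Set.Ici (0:ℝ)) := by
    intro ω hω
    by_contra h
    exact hω (subset_toMeasurable _ _ h)
  have hCae : ∀ᵐ ω ∂P, ω ∈ C := by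
    rw [ae_iff]
    have he : {a | ¬ a ∈ C} = N := by ext a; simp [hCdef]
    rw [he]; exact hN0
  set Y : ℝ → Ω → ℝ := fun s ω => if ω ∈ C then X (max s 0) ω else 0 with hY
  have hYc : ∀ ω, Continuous fun s => Y s ω := by
    intro ω
    by_cases hω : ω ∈ C
    · simp only [hY, if_pos hω]
      exact (hCc ω hω).comp_continuous (continuous_id.max continuous_const)
        (fun s => Set.mem_Ici.mpr (le_max_right _ _))
    · simp only [hY, if_neg hω]; exact continuous_const
  have hYm : ∀ s, Measurable (Y s) :=
    fun s => Measurable.ite hCm (hXm _ (le_max_right _ _)) measurable_const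
  have hYj : Measurable (Function.uncurry Y) :=
    measurable_uncurry_of_continuous_of_measurable hYc hYm
  set f : Ω × ℝ → ℝ :=
    fun p => if 0 < p.2 ∧ p.2 ≤ τ p.1 then g p.2 (Y p.2 p.1) else 0 with hf
  have hfm : Measurable f := by
    apply Measurable.ite
    · exact ((measurableSet_lt measurable_const measurable_snd).inter
        (measurableSet_le measurable_snd (hτ.comp measurable_fst)))
    · exact hg.measurable.comp (measurable_snd.prodMk
        (hYj.comp (measurable_snd.prodMk measurable_fst)))
    · exact measurable_const
  have hsm : StronglyMeasurable fun ω => ∫ s, f (ω, s) :=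
    hfm.stronglyMeasurable.integral_prod_right'
  refine ⟨fun ω => ∫ s, f (ω, s), hsm, ?_⟩
  filter_upwards [hCae] with ω hω
  have h1 : (fun s => f (ω, s))
      = Set.indicator (Set.Ioc (0:ℝ) (τ ω)) (fun s => g s (X (max s 0) ω)) := by
    funext s
    by_cases h : s ∈ Set.Ioc (0:ℝ) (τ ω)
    · have h' : 0 < s ∧ s ≤ τ ω := h
      simp only [hf, if_pos h', Set.indicator_of_mem h, hY, if_pos hω]
    · have h' : ¬ (0 < s ∧ s ≤ τ ω) := h
      simp only [hf, if_neg h', Set.indicator_of_notMem h]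
  rw [h1, integral_indicator measurableSet_Ioc]
  exact setIntegral_congr_fun measurableSet_Ioc (fun s hs => by rw [max_eq_left hs.1.le])

lemma outer_lower [IsProbabilityMeasure P] (g : Ω → ℝ) (c₀ : ℝ) (hc₀ : c₀ ≤ 0)
    (hg : ∀ ω, c₀ ≤ g ω) : c₀ ≤ ∫ ω, g ω ∂P := by
  by_cases hg' : Integrable g P
  · have h := integral_mono (integrable_const c₀) hg' hg
    simpa using h
  · rw [integral_undef hg']; exact hc₀

lemma payoff_zero (θ c : ℝ) (X : ℝ → Ω → ℝ) (t x : ℝ) :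
    payoff P θ c X t x (fun _ => 0) = 0 := by
  simp [payoff, Set.Ioc_self]

lemma payoff_lower [IsProbabilityMeasure P] {θ c : ℝ} (hθ : 0 < θ) (hc : 0 < c)
    (X : ℝ → Ω → ℝ) {t : ℝ} (x : ℝ) (ht : 0 ≤ t) (τ : Ω → ℝ) (hτ0 : ∀ ω, 0 ≤ τ ω) :
    (Real.log 2 - 1) / θ ≤ payoff P θ c X t x τ := by
  have hlog : Real.log 2 < 1 := by
    have := Real.log_two_lt_d9; linarith
  refine outer_lower P _ _ (div_nonpos_of_nonpos_of_nonneg (by linarith) hθ.le) ?_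
  intro ω
  refine inner_lower hθ _ _ (hτ0 ω) hlog ?_
  intro s hs
  have h1 := Gth_lower (θ := θ) hc (t + s) (x + X s ω)
  have h2 : Real.exp (-θ * (t + s)) ≤ Real.exp (-θ * s) :=
    Real.exp_le_exp.mpr (by nlinarith)
  linarith

lemma payoff_mono [IsProbabilityMeasure P] {θ c : ℝ} (hθ : 0 < θ) (hc : 0 < c)
    (X : ℝ → Ω → ℝ)
    (hXm : ∀ s : ℝ, 0 ≤ s → Measurable (X s))
    (hXc : ∀ᵐ ω ∂P, ContinuousOn (fun s => X s ω) (Set.Ici (0:ℝ)))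
    (τ : Ω → ℝ) (hτm : Measurable τ) (hτ0 : ∀ ω, 0 ≤ τ ω)
    {t t' x x' : ℝ} (ht : 0 ≤ t) (htt : t ≤ t') (hxx : x ≤ x')
    (hInt : Integrable (fun ω => ∫ s in Set.Ioc (0:ℝ) (τ ω),
      Gth θ c (t' + s) (x' + X s ω)) P) :
    payoff P θ c X t x τ ≤ payoff P θ c X t' x' τ := by
  have hlog : Real.log 2 < 1 := by
    have := Real.log_two_lt_d9; linarith
  set I : Ω → ℝ := fun ω => ∫ s in Set.Ioc (0:ℝ) (τ ω), Gth θ c (t + s) (x + X s ω) with hI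
  set J : Ω → ℝ := fun ω => ∫ s in Set.Ioc (0:ℝ) (τ ω), Gth θ c (t' + s) (x' + X s ω) with hJ
  have hIsm : AEStronglyMeasurable I P :=
    aesm_inner P X hXm hXc (fun s y => Gth θ c (t + s) (x + y)) (Gth_cont2 hc t x) τ hτm
  have hcmp : ∀ᵐ ω ∂P, I ω ≤ J ω := by
    filter_upwards [hXc] with ω hω
    have hpair : ∀ a b : ℝ, ContinuousOn (fun s => Gth θ c (a + s) (b + X s ω))
        (Set.Icc 0 (τ ω)) :=
      fun a b => Gth_contOn hc a b (hω.mono Set.Icc_subset_Ici_self)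
    have hint1 : IntegrableOn (fun s => Gth θ c (t + s) (x + X s ω))
        (Set.Ioc (0:ℝ) (τ ω)) volume :=
      ((hpair t x).integrableOn_Icc).mono_set Set.Ioc_subset_Icc_self
    have hint2 : IntegrableOn (fun s => Gth θ c (t' + s) (x' + X s ω))
        (Set.Ioc (0:ℝ) (τ ω)) volume :=
      ((hpair t' x').integrableOn_Icc).mono_set Set.Ioc_subset_Icc_self
    exact setIntegral_mono_on hint1 hint2 measurableSet_Ioc
      (fun s _ => Gth_mono hθ hc (by linarith) (by linarith))
  have hIlow : ∀ ω, (Real.log 2 - 1) / θ ≤ I ω := by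
    intro ω
    refine inner_lower hθ _ _ (hτ0 ω) hlog ?_
    intro s hs
    have h1 := Gth_lower (θ := θ) hc (t + s) (x + X s ω)
    have h2 : Real.exp (-θ * (t + s)) ≤ Real.exp (-θ * s) :=
      Real.exp_le_exp.mpr (by nlinarith)
    linarith
  have hIint : Integrable I P := by
    refine Integrable.mono' (hInt.abs.add (integrable_const |(Real.log 2 - 1) / θ|)) hIsm ?_
    filter_upwards [hcmp] with ω h1
    simp only [Pi.add_apply]
    rw [Real.norm_eq_abs, abs_le]
    constructor
    · have := hIlow ω
      have h2 : -|(Real.log 2 - 1) / θ| ≤ (Real.log 2 - 1) / θ := neg_abs_le _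
      have h3 : (0:ℝ) ≤ |J ω| := abs_nonneg _
      linarith
    · have h2 : J ω ≤ |J ω| := le_abs_self _
      have h3 : (0:ℝ) ≤ |(Real.log 2 - 1) / θ| := abs_nonneg _
      linarith
  exact integral_mono_ae hIint hInt hcmp

end Aux

lemma Fth_eq_exp_max {c : ℝ} (hc : 0 < c) (x : ℝ) :
    Fth c x = 1 - Real.exp (-c * max x 0) := by
  unfold Fth
  by_cases h : 0 ≤ x
  · rw [if_pos h, max_eq_left h]
  · rw [if_neg h, max_eq_right (le_of_not_ge h)]
    simp

lemma Gth_formula {θ c : ℝ} (hc : 0 < c) (t x : ℝ) :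
    Gth θ c t x = 1 - 2 * Real.exp (-(θ * t + c * max x 0)) := by
  have h := Real.exp_add (-θ * t) (-c * max x 0)
  have h2 : -θ * t + -c * max x 0 = -(θ * t + c * max x 0) := by ring
  rw [h2] at h
  rw [Gth, Fth_eq_exp_max hc, h]
  ring

/-- Basic properties of `V`: it is non-decreasing in each argument,
takes values in `(-m_θ, 0]`, is strictly negative below the curve `h^θ`, and vanishes
for `t ≥ m_θ`. -/
theorem stmt10 {Ω : Type*} {mΩ : MeasurableSpace Ω} (P : Measure Ω) [IsProbabilityMeasure P]
    (F : Filtration ℝ mΩ) (hUC : UsualConditions P F)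
    (B : ℝ → Ω → ℝ) (μ σ θ : ℝ) (hσ : 0 < σ) (hθ : 0 < θ)
    (hBM : IsStandardBM P F B)
    (X : ℝ → Ω → ℝ) (hX : X = fun t ω => μ * t + σ * B t ω)
    (mθ cθ : ℝ) (hm : mθ = Real.log 2 / θ)
    (hc : cθ = (Real.sqrt (μ ^ 2 + 2 * σ ^ 2 * θ) + μ) / σ ^ 2)
    (hth : ℝ → ℝ)
    (hhth : ∀ t, hth t =
      σ ^ 2 * (Real.log 2 - θ * t) / (Real.sqrt (μ ^ 2 + 2 * σ ^ 2 * θ) + μ)) :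
    (∀ t t' x : ℝ, 0 ≤ t → t ≤ t' → valueV P F θ cθ X t x ≤ valueV P F θ cθ X t' x) ∧
    (∀ t x y : ℝ, 0 ≤ t → x ≤ y → valueV P F θ cθ X t x ≤ valueV P F θ cθ X t y) ∧
    (∀ t x : ℝ, 0 ≤ t → -mθ < valueV P F θ cθ X t x ∧ valueV P F θ cθ X t x ≤ 0) ∧
    (∀ t x : ℝ, 0 ≤ t → t < mθ → x < hth t → valueV P F θ cθ X t x < 0) ∧
    (∀ t x : ℝ, mθ ≤ t → valueV P F θ cθ X t x = 0) := by
  -- basic positivity facts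
  have hsq : |μ| < Real.sqrt (μ ^ 2 + 2 * σ ^ 2 * θ) := by
    have h1 : μ ^ 2 < μ ^ 2 + 2 * σ ^ 2 * θ := by
      have : 0 < 2 * σ ^ 2 * θ := by positivity
      linarith
    have h2 := Real.sqrt_lt_sqrt (sq_nonneg μ) h1
    rwa [Real.sqrt_sq_eq_abs] at h2
  have hsum : 0 < Real.sqrt (μ ^ 2 + 2 * σ ^ 2 * θ) + μ := by
    have := neg_abs_le μ
    linarith
  have hcθ : 0 < cθ := by
    rw [hc]; exact div_pos hsum (by positivity)
  have hlog : Real.log 2 < 1 := by have := Real.log_two_lt_d9; linarith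
  have hlogpos : (0 : ℝ) < Real.log 2 := Real.log_pos (by norm_num)
  have hmpos : 0 < mθ := by rw [hm]; exact div_pos hlogpos hθ
  -- properties of X
  have hXm : ∀ s : ℝ, 0 ≤ s → Measurable (X s) := by
    intro s hs
    rw [hX]
    exact measurable_const.add (((hBM.adapted s hs).mono (F.le s) le_rfl).const_mul σ)
  have hXc : ∀ᵐ ω ∂P, ContinuousOn (fun s => X s ω) (Set.Ici (0:ℝ)) := by
    filter_upwards [hBM.cont] with ω hω
    rw [hX]
    exact ((continuous_const.mul continuous_id).continuousOn).add (continuousOn_const.mul hω)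
  have hX0 : ∀ᵐ ω ∂P, X 0 ω = 0 := by
    filter_upwards [hBM.start] with ω h
    rw [hX]; simp [h]
  -- stopping times are measurable
  have hτmeas : ∀ τ : Ω → ℝ, IsStoppingTime F (fun ω => (τ ω : WithTop ℝ)) → Measurable τ := by
    intro τ hτ
    apply measurable_of_Iic
    intro r
    have h := hτ r
    simp only [WithTop.coe_le_coe] at h
    exact (F.le r) _ h
  -- the admissible sets
  set SS : ℝ → ℝ → Set ℝ := fun t x => {v : ℝ | ∃ τ : Ω → ℝ, IsStoppingTime F (fun ω => (τ ω : WithTop ℝ)) ∧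
    (∀ ω, 0 ≤ τ ω) ∧ v = payoff P θ cθ X t x τ} with hSS
  have hVdef : ∀ t x : ℝ, valueV P F θ cθ X t x = sInf (SS t x) := fun _ _ => rfl
  have hmem0 : ∀ t x : ℝ, (0:ℝ) ∈ SS t x := by
    intro t x
    exact ⟨fun _ => 0, isStoppingTime_const F 0, fun _ => le_rfl, (payoff_zero P θ cθ X t x).symm⟩
  have hbdd : ∀ t x : ℝ, 0 ≤ t → BddBelow (SS t x) := by
    intro t x ht
    refine ⟨(Real.log 2 - 1) / θ, ?_⟩
    rintro v ⟨τ, hτ, hτ0, rfl⟩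
    exact payoff_lower P hθ hcθ X x ht τ hτ0
  have hV0 : ∀ t x : ℝ, 0 ≤ t → valueV P F θ cθ X t x ≤ 0 := by
    intro t x ht
    rw [hVdef]
    exact csInf_le (hbdd t x ht) (hmem0 t x)
  have hVlow : ∀ t x : ℝ, 0 ≤ t → (Real.log 2 - 1) / θ ≤ valueV P F θ cθ X t x := by
    intro t x ht
    rw [hVdef]
    refine le_csInf ⟨0, hmem0 t x⟩ ?_
    rintro v ⟨τ, hτ, hτ0, rfl⟩
    exact payoff_lower P hθ hcθ X x ht τ hτ0
  -- monotonicity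
  have hmono : ∀ t t' x x' : ℝ, 0 ≤ t → t ≤ t' → x ≤ x' →
      valueV P F θ cθ X t x ≤ valueV P F θ cθ X t' x' := by
    intro t t' x x' ht htt hxx
    rw [hVdef t' x']
    refine le_csInf ⟨0, hmem0 t' x'⟩ ?_
    rintro v ⟨τ, hτ, hτ0, rfl⟩
    by_cases hInt : Integrable (fun ω => ∫ s in Set.Ioc (0:ℝ) (τ ω),
        Gth θ cθ (t' + s) (x' + X s ω)) P
    · refine le_trans ?_ (payoff_mono P hθ hcθ X hXm hXc τ (hτmeas τ hτ) hτ0 ht htt hxx hInt)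
      rw [hVdef]
      exact csInf_le (hbdd t x ht) ⟨τ, hτ, hτ0, rfl⟩
    · have hzero : payoff P θ cθ X t' x' τ = 0 := integral_undef hInt
      rw [hzero]
      exact hV0 t x ht
  refine ⟨fun t t' x ht htt => hmono t t' x x ht htt le_rfl,
    fun t x y ht hxy => hmono t t x y ht le_rfl hxy, ?_, ?_, ?_⟩
  · -- bounds
    intro t x ht
    refine ⟨lt_of_lt_of_le ?_ (hVlow t x ht), hV0 t x ht⟩
    have h2 : 1 < 2 * Real.log 2 := by have := Real.log_two_gt_d9; linarith
    rw [hm, ← neg_div, div_lt_div_iff₀ hθ hθ]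
    nlinarith
  · -- strict negativity
    intro t x ht htm hx
    have hσ' : σ ≠ 0 := ne_of_gt hσ
    have hsum' : Real.sqrt (μ ^ 2 + 2 * σ ^ 2 * θ) + μ ≠ 0 := ne_of_gt hsum
    have hthx : cθ * x < Real.log 2 - θ * t := by
      have hcal : cθ * hth t = Real.log 2 - θ * t := by
        rw [hc, hhth t]
        field_simp
      nlinarith [mul_lt_mul_of_pos_left hx hcθ]
    have hq : Gth θ cθ t x < 0 := by
      rw [Gth_formula hcθ]
      have hlt : θ * t + cθ * max x 0 < Real.log 2 := by
        rcases le_or_gt x 0 with h0 | h0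
        · rw [max_eq_right h0]
          rw [hm, lt_div_iff₀ hθ] at htm
          nlinarith
        · rw [max_eq_left h0.le]
          linarith
      have h2 : Real.exp (-Real.log 2) < Real.exp (-(θ * t + cθ * max x 0)) :=
        Real.exp_lt_exp.mpr (by linarith)
      rw [Real.exp_neg, Real.exp_log (by norm_num : (0:ℝ) < 2)] at h2
      linarith
    set d : ℝ := -(Gth θ cθ t x) / 2 with hd
    have hd0 : 0 < d := by rw [hd]; linarith
    obtain ⟨η, hη, hball⟩ : ∃ η > 0, ∀ s y : ℝ, |s| ≤ η → |y - x| ≤ η →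
        Gth θ cθ (t + s) y ≤ -d := by
      have hc2 : ContinuousAt (fun p : ℝ × ℝ => Gth θ cθ p.1 p.2) (t, x) :=
        (Gth_cont hcθ).continuousAt
      rw [Metric.continuousAt_iff] at hc2
      obtain ⟨δ, hδ, hδ'⟩ := hc2 d hd0
      refine ⟨δ / 2, by linarith, fun s y hs hy => ?_⟩
      have hdist : dist ((t + s, y) : ℝ × ℝ) (t, x) < δ := by
        rw [Prod.dist_eq]
        apply max_lt
        · rw [Real.dist_eq]
          simp only [add_sub_cancel_left]
          exact lt_of_le_of_lt hs (by linarith)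
        · rw [Real.dist_eq]
          exact lt_of_le_of_lt hy (by linarith)
      have hlt2 := hδ' hdist
      rw [Real.dist_eq] at hlt2
      have h3 : Gth θ cθ (t + s) y - Gth θ cθ t x < d := (abs_lt.mp hlt2).2
      have h4 : Gth θ cθ t x = -(2 * d) := by rw [hd]; ring
      linarith
    -- good full-measure set
    have hae : ∀ᵐ ω ∂P, ContinuousOn (fun s => X s ω) (Set.Ici (0:ℝ)) ∧ X 0 ω = 0 :=
      hXc.and hX0
    set D := {ω : Ω | ContinuousOn (fun s => X s ω) (Set.Ici (0:ℝ)) ∧ X 0 ω = 0} with hD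
    set C := (toMeasurable P Dᶜ)ᶜ with hCdef
    have hCm : MeasurableSet C := (measurableSet_toMeasurable _ _).compl
    have hCsub : C ⊆ D := by
      intro ω hω
      by_contra h
      exact hω (subset_toMeasurable _ _ h)
    have hPC : P C = 1 := by
      have h0 : P (toMeasurable P Dᶜ) = 0 := by
        rw [measure_toMeasurable]
        rw [ae_iff] at hae
        exact hae
      rw [hCdef, prob_compl_eq_one_sub (measurableSet_toMeasurable _ _), h0]
      simp
    -- approximating events
    set A : ℕ → Set Ω := fun n => C ∩ ⋂ (r : ℚ),
      {ω : Ω | (0 ≤ (r:ℝ) ∧ (r:ℝ) ≤ 1/(n+1)) → |X r ω| ≤ η} with hA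
    have hAm : ∀ n, MeasurableSet (A n) := by
      intro n
      refine hCm.inter (MeasurableSet.iInter fun r => ?_)
      by_cases hr : (0 ≤ (r:ℝ) ∧ (r:ℝ) ≤ 1/(n+1))
      · have he : {ω : Ω | (0 ≤ (r:ℝ) ∧ (r:ℝ) ≤ 1/(n+1)) → |X r ω| ≤ η}
            = {ω : Ω | |X (r:ℝ) ω| ≤ η} := by
          ext ω
          simp only [Set.mem_setOf_eq]
          exact ⟨fun h => h hr, fun h _ => h⟩
        rw [he]
        exact measurableSet_le (hXm _ hr.1).abs measurable_const
      · have he : {ω : Ω | (0 ≤ (r:ℝ) ∧ (r:ℝ) ≤ 1/(n+1)) → |X r ω| ≤ η} = Set.univ := by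
          ext ω
          simp only [Set.mem_setOf_eq, Set.mem_univ, iff_true]
          exact fun h => absurd h hr
        rw [he]
        exact MeasurableSet.univ
    have hAmono : Monotone A := by
      intro n m hnm
      refine Set.inter_subset_inter Set.Subset.rfl ?_
      intro ω hω
      simp only [Set.mem_iInter, Set.mem_setOf_eq] at hω ⊢
      intro r hr
      refine hω r ⟨hr.1, hr.2.trans ?_⟩
      refine one_div_le_one_div_of_le (by positivity) ?_
      have : (n:ℝ) ≤ (m:ℝ) := Nat.cast_le.mpr hnm
      linarith
    have hreal : ∀ n : ℕ, ∀ ω ∈ A n, ∀ s : ℝ, 0 ≤ s → s ≤ 1/(n+1) → |X s ω| ≤ η := by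
      intro n ω hω s hs0 hs1
      have hcont := (hCsub hω.1).1
      have hX00 := (hCsub hω.1).2
      have hωr : ∀ r : ℚ, (0 ≤ (r:ℝ) ∧ (r:ℝ) ≤ 1/(n+1)) → |X r ω| ≤ η := by
        intro r hr
        have h9 := hω.2
        simp only [Set.mem_iInter, Set.mem_setOf_eq] at h9
        exact h9 r hr
      rcases eq_or_lt_of_le hs0 with h0 | h0
      · rw [← h0, hX00]
        simpa using hη.le
      · by_contra hgt
        push_neg at hgt
        have hcw : ContinuousWithinAt (fun u => X u ω) (Set.Ici (0:ℝ)) s := hcont s h0.le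
        rw [Metric.continuousWithinAt_iff] at hcw
        obtain ⟨δ, hδ, hδ'⟩ := hcw (|X s ω| - η) (by linarith)
        obtain ⟨r, hr1, hr2⟩ := exists_rat_btwn
          (show max (s - δ) 0 < s from max_lt (by linarith) h0)
        have hr0 : (0:ℝ) ≤ (r:ℝ) := le_of_lt (lt_of_le_of_lt (le_max_right _ _) hr1)
        have hXr : |X (r:ℝ) ω| ≤ η := hωr r ⟨hr0, by linarith⟩
        have hd2 : dist (X (r:ℝ) ω) (X s ω) < |X s ω| - η := by
          refine hδ' hr0 ?_
          rw [Real.dist_eq]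
          have h10 : s - δ < (r:ℝ) := lt_of_le_of_lt (le_max_left _ _) hr1
          rw [abs_of_neg (by linarith : (r:ℝ) - s < 0)]
          linarith
        rw [Real.dist_eq] at hd2
        have h5 : |X s ω| - |X (r:ℝ) ω| ≤ |X (r:ℝ) ω - X s ω| := by
          rw [abs_sub_comm]
          exact abs_sub_abs_le_abs_sub _ _
        linarith
    have hcover : C ⊆ ⋃ n, A n := by
      intro ω hωC
      have hcont := (hCsub hωC).1
      have hX00 := (hCsub hωC).2
      have hcw : ContinuousWithinAt (fun u => X u ω) (Set.Ici (0:ℝ)) 0 := hcont 0 Set.self_mem_Ici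
      rw [Metric.continuousWithinAt_iff] at hcw
      obtain ⟨δ, hδ, hδ'⟩ := hcw η hη
      obtain ⟨n, hn⟩ := exists_nat_one_div_lt hδ
      refine Set.mem_iUnion.mpr ⟨n, hωC, ?_⟩
      simp only [Set.mem_iInter, Set.mem_setOf_eq]
      rintro r ⟨hr0, hr1⟩
      have hdist : dist (X (r:ℝ) ω) (X 0 ω) < η := by
        refine hδ' hr0 ?_
        rw [Real.dist_eq, sub_zero, abs_of_nonneg hr0]
        exact lt_of_le_of_lt hr1 hn
      rw [Real.dist_eq, hX00, sub_zero] at hdist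
      exact hdist.le
    have hP1 : P (⋃ n, A n) = 1 :=
      le_antisymm prob_le_one (hPC ▸ measure_mono hcover)
    have htend := tendsto_measure_iUnion_atTop (μ := P) hAmono
    rw [hP1] at htend
    have hr₀lt : ENNReal.ofReal (1/(1+d)) < 1 := by
      rw [ENNReal.ofReal_lt_one, div_lt_one (by linarith)]
      linarith
    have hev1 : ∀ᶠ n in atTop, ENNReal.ofReal (1/(1+d)) < P (A n) :=
      htend.eventually_const_lt hr₀lt
    have hev2 : ∀ᶠ n : ℕ in atTop, 1/((n:ℝ)+1) ≤ η := by
      obtain ⟨n₂, hn₂⟩ := exists_nat_one_div_lt hη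
      rw [eventually_atTop]
      refine ⟨n₂, fun m hm => ?_⟩
      have h11 : 1/((m:ℝ)+1) ≤ 1/((n₂:ℝ)+1) := by
        refine one_div_le_one_div_of_le (by positivity) ?_
        have : (n₂:ℝ) ≤ (m:ℝ) := Nat.cast_le.mpr hm
        linarith
      linarith
    obtain ⟨N, hN1, hN2⟩ := (hev1.and hev2).exists
    set ε : ℝ := 1/((N:ℝ)+1) with hεdef
    have hε : 0 < ε := by rw [hεdef]; positivity
    set I : Ω → ℝ := fun ω => ∫ s in Set.Ioc (0:ℝ) ε, Gth θ cθ (t + s) (x + X s ω) with hIdef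
    have hIaesm : AEStronglyMeasurable I P :=
      aesm_inner P X hXm hXc (fun s y => Gth θ cθ (t + s) (x + y)) (Gth_cont2 hcθ t x)
        (fun _ => ε) measurable_const
    have hIbd : ∀ ω, |I ω| ≤ ε := by
      intro ω
      by_cases hi : IntegrableOn (fun s => Gth θ cθ (t + s) (x + X s ω))
        (Set.Ioc (0:ℝ) ε) volume
      · have habs : ∀ s ∈ Set.Ioc (0:ℝ) ε, |Gth θ cθ (t + s) (x + X s ω)| ≤ 1 := by
          intro s hs
          rw [abs_le]
          constructor
          · have h1 := Gth_lower (θ := θ) hcθ (t + s) (x + X s ω)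
            have h2 : Real.exp (-θ * (t + s)) ≤ 1 := by
              rw [show (1:ℝ) = Real.exp 0 by simp]
              apply Real.exp_le_exp.mpr
              nlinarith [hs.1]
            linarith
          · exact Gth_le_one hcθ _ _
        have h3 : |I ω| ≤ ∫ s in Set.Ioc (0:ℝ) ε, |Gth θ cθ (t + s) (x + X s ω)| := by
          simpa [Real.norm_eq_abs] using
            norm_integral_le_integral_norm (μ := volume.restrict (Set.Ioc (0:ℝ) ε))
              (fun s => Gth θ cθ (t + s) (x + X s ω))
        have h4 : ∫ s in Set.Ioc (0:ℝ) ε, |Gth θ cθ (t + s) (x + X s ω)|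
            ≤ ∫ _ in Set.Ioc (0:ℝ) ε, (1:ℝ) :=
          setIntegral_mono_on hi.abs (integrableOn_const measure_Ioc_lt_top.ne)
            measurableSet_Ioc habs
        have h5 : ∫ _ in Set.Ioc (0:ℝ) ε, (1:ℝ) = ε := by
          rw [setIntegral_const, measureReal_def, Real.volume_Ioc, smul_eq_mul, mul_one,
            ENNReal.toReal_ofReal (by linarith)]
          ring
        linarith
      · have h12 : I ω = 0 := integral_undef hi
        rw [h12]
        simpa using hε.le
    have hIint : Integrable I P := by
      refine Integrable.mono' (integrable_const ε) hIaesm (ae_of_all _ fun ω => ?_)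
      rw [Real.norm_eq_abs]
      exact hIbd ω
    have hIA : ∀ ω ∈ A N, I ω ≤ -d * ε := by
      intro ω hω
      have hcont := (hCsub hω.1).1
      have hc1 : ContinuousOn (fun s => Gth θ cθ (t + s) (x + X s ω)) (Set.Icc 0 ε) :=
        Gth_contOn hcθ t x (hcont.mono Set.Icc_subset_Ici_self)
      have hi : IntegrableOn (fun s => Gth θ cθ (t + s) (x + X s ω))
          (Set.Ioc (0:ℝ) ε) volume :=
        (hc1.integrableOn_Icc).mono_set Set.Ioc_subset_Icc_self
      have hb : ∀ s ∈ Set.Ioc (0:ℝ) ε, Gth θ cθ (t + s) (x + X s ω) ≤ -d := by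
        intro s hs
        refine hball s (x + X s ω) ?_ ?_
        · rw [abs_of_pos hs.1]
          exact hs.2.trans hN2
        · have h6 : |X s ω| ≤ η := hreal N ω hω s hs.1.le hs.2
          simpa [add_sub_cancel_left] using h6
      calc I ω ≤ ∫ _ in Set.Ioc (0:ℝ) ε, (-d) :=
          setIntegral_mono_on hi (integrableOn_const measure_Ioc_lt_top.ne)
            measurableSet_Ioc hb
        _ = (volume (Set.Ioc (0:ℝ) ε)).toReal • (-d) := setIntegral_const _
        _ = -d * ε := by
            rw [Real.volume_Ioc, smul_eq_mul, ENNReal.toReal_ofReal (by linarith)]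
            ring
    set p : ℝ := (P (A N)).toReal with hp
    have hpgt : 1/(1+d) < p := by
      have h1 := (ENNReal.toReal_lt_toReal (by simp) (measure_ne_top P _)).mpr hN1
      rwa [ENNReal.toReal_ofReal (by positivity)] at h1
    have hcompl : (P ((A N)ᶜ)).toReal = 1 - p := by
      rw [prob_compl_eq_one_sub (hAm N),
        ENNReal.toReal_sub_of_le prob_le_one (by simp)]
      simp [hp]
    have h1 : ∫ ω in A N, I ω ∂P ≤ p * (-d * ε) := by
      calc ∫ ω in A N, I ω ∂P ≤ ∫ _ in A N, (-d * ε) ∂P :=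
          setIntegral_mono_on (hIint.integrableOn)
            (integrableOn_const (measure_lt_top P _).ne) (hAm N) hIA
        _ = (P (A N)).toReal • (-d * ε) := setIntegral_const _
        _ = p * (-d * ε) := by rw [hp, smul_eq_mul]
    have h2 : ∫ ω in (A N)ᶜ, I ω ∂P ≤ (1 - p) * ε := by
      calc ∫ ω in (A N)ᶜ, I ω ∂P ≤ ∫ _ in (A N)ᶜ, ε ∂P :=
          setIntegral_mono_on (hIint.integrableOn)
            (integrableOn_const (measure_lt_top P _).ne) (hAm N).compl
            (fun ω _ => (abs_le.mp (hIbd ω)).2)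
        _ = (P ((A N)ᶜ)).toReal • ε := setIntegral_const _
        _ = (1 - p) * ε := by rw [hcompl, smul_eq_mul]
    have hsplit : ∫ ω, I ω ∂P = ∫ ω in A N, I ω ∂P + ∫ ω in (A N)ᶜ, I ω ∂P :=
      (integral_add_compl (hAm N) hIint).symm
    have hpay : payoff P θ cθ X t x (fun _ => ε) < 0 := by
      have hpayeq : payoff P θ cθ X t x (fun _ => ε) = ∫ ω, I ω ∂P := rfl
      rw [hpayeq, hsplit]
      have hd1 : 1 < p * (1 + d) := by
        rw [div_lt_iff₀ (by linarith)] at hpgt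
        linarith
      have key : p * (-d * ε) + (1 - p) * ε = -(ε * (p * (1 + d) - 1)) := by ring
      have pos : 0 < ε * (p * (1 + d) - 1) := mul_pos hε (by linarith)
      linarith
    have hmemε : payoff P θ cθ X t x (fun _ => ε) ∈ SS t x :=
      ⟨fun _ => ε, isStoppingTime_const F ε, fun _ => hε.le, rfl⟩
    rw [hVdef]
    exact lt_of_le_of_lt (csInf_le (hbdd t x ht) hmemε) hpay
  · -- vanishing
    intro t x ht
    have ht0 : 0 ≤ t := le_trans hmpos.le ht
    refine le_antisymm (hV0 t x ht0) ?_
    rw [hVdef]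
    refine le_csInf ⟨0, hmem0 t x⟩ ?_
    rintro v ⟨τ, hτ, hτ0, rfl⟩
    refine integral_nonneg fun ω => ?_
    refine setIntegral_nonneg measurableSet_Ioc fun s hs => ?_
    have h1 := Gth_lower (θ := θ) hcθ (t + s) (x + X s ω)
    have h2 : Real.exp (-θ * (t + s)) ≤ Real.exp (-Real.log 2) := by
      apply Real.exp_le_exp.mpr
      have : Real.log 2 ≤ θ * t := by
        rw [hm] at ht
        calc Real.log 2 = θ * (Real.log 2 / θ) := by field_simp
        _ ≤ θ * t := by nlinarith
      nlinarith [hs.1]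
    rw [Real.exp_neg, Real.exp_log (by norm_num : (0:ℝ) < 2)] at h2
    linarith
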